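/- Let Ω ⊆ ℂ be open, let a, b be smooth real-valued functions and h a smooth positive real-valued function on Ω, with covariant derivatives ∇, ∇̄ and magnetic field B = h²(∂ₓb - ∂_y a). Let W be a smooth nonvanishing real-valued function on Ω and define ∇̃φ = ∇φ - (∂W/W)φ + 2(∂h/h)φ. Then for every smooth ψ : Ω → ℂ, 2h²(∇̃(∇̄ψ) - ∇̄(∇̃ψ)) = B̃ψ, where B̃ = B + (1/2)Δ_h(log|W|) - K, Δ_h = 4h²∂∂̄ is the Laplace–Beltrami operator and K = 4h²∂∂̄(log h) is the Gaussian curvature. That is, the Laplace transformation changes the magnetic field by B ↦ B + (1/2)Δ_h log|U - B| - K. -/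

import Mathlib

open Complex ComplexConjugate MeasureTheory

noncomputable section

/-- Partial derivative in the x-direction (identifying ℂ with ℝ²). -/
def pdx (f : ℂ → ℂ) (z : ℂ) : ℂ := fderiv ℝ f z 1

/-- Partial derivative in the y-direction. -/
def pdy (f : ℂ → ℂ) (z : ℂ) : ℂ := fderiv ℝ f z Complex.I

/-- Wirtinger derivative ∂ = (∂ₓ - i ∂_y)/2. -/
def wd (f : ℂ → ℂ) (z : ℂ) : ℂ := (pdx f z - Complex.I * pdy f z) / 2

/-- Wirtinger derivative ∂̄ = (∂ₓ + i ∂_y)/2. -/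
def wdb (f : ℂ → ℂ) (z : ℂ) : ℂ := (pdx f z + Complex.I * pdy f z) / 2

/-- x-derivative of a real-valued function. -/
def pdxR (f : ℂ → ℝ) (z : ℂ) : ℝ := fderiv ℝ f z 1

/-- y-derivative of a real-valued function. -/
def pdyR (f : ℂ → ℝ) (z : ℂ) : ℝ := fderiv ℝ f z Complex.I

/-- Magnetic field B = h²(∂ₓ b - ∂_y a). -/
def Bf (a b h : ℂ → ℝ) (z : ℂ) : ℝ := (h z)^2 * (pdxR b z - pdyR a z)

/-- Covariant derivative ∇ψ = ∂ψ - iAψ with A = (a - ib)/2. -/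
def cd (a b : ℂ → ℝ) (ψ : ℂ → ℂ) (z : ℂ) : ℂ :=
  wd ψ z - Complex.I * (((a z : ℂ) - Complex.I * (b z : ℂ)) / 2) * ψ z

/-- Covariant derivative ∇̄ψ = ∂̄ψ - iĀψ with Ā = (a + ib)/2. -/
def cdb (a b : ℂ → ℝ) (ψ : ℂ → ℂ) (z : ℂ) : ℂ :=
  wdb ψ z - Complex.I * (((a z : ℂ) + Complex.I * (b z : ℂ)) / 2) * ψ z

/-- Laplace–Beltrami operator Δ_h f = 4h²∂∂̄f of the metric (dx² + dy²)/h²,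
applied to a real-valued function. -/
def DeltaH (h f : ℂ → ℝ) (z : ℂ) : ℂ :=
  4 * (h z : ℂ)^2 * wd (wdb (fun w => (f w : ℂ))) z

/-- Gaussian curvature K = 4h²∂∂̄(log h) of the metric (dx² + dy²)/h². -/
def Kcurv (h : ℂ → ℝ) (z : ℂ) : ℂ :=
  4 * (h z : ℂ)^2 * wd (wdb (fun w => (Real.log (h w) : ℂ))) z

private lemma pdDiff {f : ℂ → ℂ} {z : ℂ} (hf : ContDiffAt ℝ 2 f z) (v : ℂ) :
    DifferentiableAt ℝ (fun w => fderiv ℝ f w v) z := by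
  have h1 : ContDiffAt ℝ 1 (fderiv ℝ f) z := hf.fderiv_right (by norm_num)
  exact (ContinuousLinearMap.apply ℝ ℂ v).differentiable.differentiableAt.comp z
    (h1.differentiableAt one_ne_zero)

private lemma pd_swap {f : ℂ → ℂ} {z : ℂ} (hf : ContDiffAt ℝ 2 f z) (u v : ℂ) :
    fderiv ℝ (fun w => fderiv ℝ f w v) z u = fderiv ℝ (fun w => fderiv ℝ f w u) z v := by
  have hd : DifferentiableAt ℝ (fderiv ℝ f) z :=
    (hf.fderiv_right (by norm_num) : ContDiffAt ℝ 1 _ _).differentiableAt one_ne_zero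
  have h1 : ∀ v u : ℂ, fderiv ℝ (fun w => fderiv ℝ f w v) z u
      = fderiv ℝ (fderiv ℝ f) z u v := by
    intro v u
    rw [fderiv_clm_apply hd (differentiableAt_const v)]
    simp
  rw [h1, h1]
  exact hf.isSymmSndFDerivAt (by norm_num) u v

private lemma pd_add {f g : ℂ → ℂ} {z : ℂ} (hf : DifferentiableAt ℝ f z)
    (hg : DifferentiableAt ℝ g z) (v : ℂ) :
    fderiv ℝ (fun w => f w + g w) z v = fderiv ℝ f z v + fderiv ℝ g z v := by
  rw [fderiv_fun_add hf hg]; rfl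

private lemma pd_sub {f g : ℂ → ℂ} {z : ℂ} (hf : DifferentiableAt ℝ f z)
    (hg : DifferentiableAt ℝ g z) (v : ℂ) :
    fderiv ℝ (fun w => f w - g w) z v = fderiv ℝ f z v - fderiv ℝ g z v := by
  rw [fderiv_fun_sub hf hg]; rfl

private lemma pd_mul {f g : ℂ → ℂ} {z : ℂ} (hf : DifferentiableAt ℝ f z)
    (hg : DifferentiableAt ℝ g z) (v : ℂ) :
    fderiv ℝ (fun w => f w * g w) z v = fderiv ℝ f z v * g z + f z * fderiv ℝ g z v := by
  rw [fderiv_fun_mul hf hg]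
  simp only [ContinuousLinearMap.add_apply, ContinuousLinearMap.smul_apply, smul_eq_mul]
  ring

private lemma pd_const_mul {f : ℂ → ℂ} {z : ℂ} (hf : DifferentiableAt ℝ f z) (c v : ℂ) :
    fderiv ℝ (fun w => c * f w) z v = c * fderiv ℝ f z v := by
  rw [fderiv_const_mul hf]; simp

private lemma pd_div_const {f : ℂ → ℂ} {z : ℂ} (hf : DifferentiableAt ℝ f z) (c v : ℂ) :
    fderiv ℝ (fun w => f w / c) z v = fderiv ℝ f z v / c := by
  simp only [div_eq_mul_inv]
  rw [fderiv_mul_const hf]; simp [mul_comm]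

private lemma pd_ofReal {f : ℂ → ℝ} {z : ℂ} (hf : DifferentiableAt ℝ f z) (v : ℂ) :
    fderiv ℝ (fun w => ((f w : ℝ) : ℂ)) z v = ((fderiv ℝ f z v : ℝ) : ℂ) := by
  have := (Complex.ofRealCLM.hasFDerivAt.comp z hf.hasFDerivAt).fderiv
  rw [show (fun w => ((f w : ℝ) : ℂ)) = Complex.ofRealCLM ∘ f from rfl, this]
  simp

private lemma pd_log {f : ℂ → ℝ} {z : ℂ} (hf : DifferentiableAt ℝ f z) (h0 : f z ≠ 0) (v : ℂ) :
    fderiv ℝ (fun w => ((Real.log (f w) : ℝ) : ℂ)) z v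
      = fderiv ℝ (fun w => ((f w : ℝ) : ℂ)) z v / (f z : ℂ) := by
  have h1 : HasFDerivAt (fun w => Real.log (f w)) ((f z)⁻¹ • fderiv ℝ f z) z :=
    (Real.hasDerivAt_log h0).comp_hasFDerivAt z hf.hasFDerivAt
  have h2 := (Complex.ofRealCLM.hasFDerivAt.comp z h1).fderiv
  rw [show (fun w => ((Real.log (f w) : ℝ) : ℂ)) = Complex.ofRealCLM ∘ (fun w => Real.log (f w)) from rfl,
    h2, pd_ofReal hf]
  simp
  field_simp

-- wd layer
private lemma wd_congr {f g : ℂ → ℂ} {z : ℂ} (h : f =ᶠ[nhds z] g) : wd f z = wd g z := by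
  simp [wd, pdx, pdy, h.fderiv_eq]

private lemma wdb_congr {f g : ℂ → ℂ} {z : ℂ} (h : f =ᶠ[nhds z] g) : wdb f z = wdb g z := by
  simp [wdb, pdx, pdy, h.fderiv_eq]

private lemma wd_add {f g : ℂ → ℂ} {z : ℂ} (hf : DifferentiableAt ℝ f z)
    (hg : DifferentiableAt ℝ g z) :
    wd (fun w => f w + g w) z = wd f z + wd g z := by
  simp only [wd, pdx, pdy, pd_add hf hg]; ring

private lemma wdb_add {f g : ℂ → ℂ} {z : ℂ} (hf : DifferentiableAt ℝ f z)
    (hg : DifferentiableAt ℝ g z) :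
    wdb (fun w => f w + g w) z = wdb f z + wdb g z := by
  simp only [wdb, pdx, pdy, pd_add hf hg]; ring

private lemma wd_sub {f g : ℂ → ℂ} {z : ℂ} (hf : DifferentiableAt ℝ f z)
    (hg : DifferentiableAt ℝ g z) :
    wd (fun w => f w - g w) z = wd f z - wd g z := by
  simp only [wd, pdx, pdy, pd_sub hf hg]; ring

private lemma wdb_sub {f g : ℂ → ℂ} {z : ℂ} (hf : DifferentiableAt ℝ f z)
    (hg : DifferentiableAt ℝ g z) :
    wdb (fun w => f w - g w) z = wdb f z - wdb g z := by
  simp only [wdb, pdx, pdy, pd_sub hf hg]; ring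

private lemma wd_mul {f g : ℂ → ℂ} {z : ℂ} (hf : DifferentiableAt ℝ f z)
    (hg : DifferentiableAt ℝ g z) :
    wd (fun w => f w * g w) z = wd f z * g z + f z * wd g z := by
  simp only [wd, pdx, pdy, pd_mul hf hg]; ring

private lemma wdb_mul {f g : ℂ → ℂ} {z : ℂ} (hf : DifferentiableAt ℝ f z)
    (hg : DifferentiableAt ℝ g z) :
    wdb (fun w => f w * g w) z = wdb f z * g z + f z * wdb g z := by
  simp only [wdb, pdx, pdy, pd_mul hf hg]; ring

private lemma wd_const_mul {f : ℂ → ℂ} {z : ℂ} (hf : DifferentiableAt ℝ f z) (c : ℂ) :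
    wd (fun w => c * f w) z = c * wd f z := by
  simp only [wd, pdx, pdy, pd_const_mul hf]; ring

private lemma wdb_const_mul {f : ℂ → ℂ} {z : ℂ} (hf : DifferentiableAt ℝ f z) (c : ℂ) :
    wdb (fun w => c * f w) z = c * wdb f z := by
  simp only [wdb, pdx, pdy, pd_const_mul hf]; ring

private lemma wd_log {f : ℂ → ℝ} {z : ℂ} (hf : DifferentiableAt ℝ f z) (h0 : f z ≠ 0) :
    wd (fun w => ((Real.log (f w) : ℝ) : ℂ)) z = wd (fun w => ((f w : ℝ) : ℂ)) z / (f z : ℂ) := by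
  simp only [wd, pdx, pdy, pd_log hf h0]; ring

private lemma wdb_log {f : ℂ → ℝ} {z : ℂ} (hf : DifferentiableAt ℝ f z) (h0 : f z ≠ 0) :
    wdb (fun w => ((Real.log (f w) : ℝ) : ℂ)) z
      = wdb (fun w => ((f w : ℝ) : ℂ)) z / (f z : ℂ) := by
  simp only [wdb, pdx, pdy, pd_log hf h0]; ring

private lemma wdDiff {f : ℂ → ℂ} {z : ℂ} (hf : ContDiffAt ℝ 2 f z) :
    DifferentiableAt ℝ (fun w => wd f w) z := by
  have : (fun w => wd f w)
      = fun w => (fderiv ℝ f w 1 - Complex.I * fderiv ℝ f w Complex.I) / 2 := rfl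
  rw [this]
  simp only [div_eq_mul_inv]
  exact DifferentiableAt.mul_const ((pdDiff hf 1).sub ((pdDiff hf Complex.I).const_mul Complex.I)) _

private lemma wdbDiff {f : ℂ → ℂ} {z : ℂ} (hf : ContDiffAt ℝ 2 f z) :
    DifferentiableAt ℝ (fun w => wdb f w) z := by
  have : (fun w => wdb f w)
      = fun w => (fderiv ℝ f w 1 + Complex.I * fderiv ℝ f w Complex.I) / 2 := rfl
  rw [this]
  simp only [div_eq_mul_inv]
  exact DifferentiableAt.mul_const ((pdDiff hf 1).add ((pdDiff hf Complex.I).const_mul Complex.I)) _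

private lemma pd_wd {f : ℂ → ℂ} {z : ℂ} (hf : ContDiffAt ℝ 2 f z) (v : ℂ) :
    fderiv ℝ (fun w => wd f w) z v
      = (fderiv ℝ (fun w => fderiv ℝ f w 1) z v
          - Complex.I * fderiv ℝ (fun w => fderiv ℝ f w Complex.I) z v) / 2 := by
  have h1 := pdDiff hf 1
  have hI := pdDiff hf Complex.I
  have : (fun w => wd f w)
      = fun w => ((fun w => fderiv ℝ f w 1) w
          - Complex.I * (fun w => fderiv ℝ f w Complex.I) w) / 2 := rfl
  rw [this, pd_div_const (h1.fun_sub (hI.const_mul Complex.I)),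
    pd_sub h1 (hI.const_mul Complex.I), pd_const_mul hI]

private lemma pd_wdb {f : ℂ → ℂ} {z : ℂ} (hf : ContDiffAt ℝ 2 f z) (v : ℂ) :
    fderiv ℝ (fun w => wdb f w) z v
      = (fderiv ℝ (fun w => fderiv ℝ f w 1) z v
          + Complex.I * fderiv ℝ (fun w => fderiv ℝ f w Complex.I) z v) / 2 := by
  have h1 := pdDiff hf 1
  have hI := pdDiff hf Complex.I
  have : (fun w => wdb f w)
      = fun w => ((fun w => fderiv ℝ f w 1) w
          + Complex.I * (fun w => fderiv ℝ f w Complex.I) w) / 2 := rfl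
  rw [this, pd_div_const (h1.fun_add (hI.const_mul Complex.I)),
    pd_add h1 (hI.const_mul Complex.I), pd_const_mul hI]

private lemma wd_wdb_comm {f : ℂ → ℂ} {z : ℂ} (hf : ContDiffAt ℝ 2 f z) :
    wd (fun w => wdb f w) z = wdb (fun w => wd f w) z := by
  rw [show wd (fun w => wdb f w) z = (fderiv ℝ (fun w => wdb f w) z 1
        - Complex.I * fderiv ℝ (fun w => wdb f w) z Complex.I) / 2 from rfl,
    show wdb (fun w => wd f w) z = (fderiv ℝ (fun w => wd f w) z 1
        + Complex.I * fderiv ℝ (fun w => wd f w) z Complex.I) / 2 from rfl,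
    pd_wdb hf 1, pd_wdb hf Complex.I, pd_wd hf 1, pd_wd hf Complex.I,
    pd_swap hf Complex.I 1]
  ring

private lemma diff_div_const {f : ℂ → ℂ} {z c : ℂ} (hf : DifferentiableAt ℝ f z) :
    DifferentiableAt ℝ (fun w => f w / c) z := by
  simp only [div_eq_mul_inv]; exact hf.mul_const _

private lemma wd_div_const {f : ℂ → ℂ} {z : ℂ} (hf : DifferentiableAt ℝ f z) (c : ℂ) :
    wd (fun w => f w / c) z = wd f z / c := by
  simp only [wd, pdx, pdy, pd_div_const hf]; ring

private lemma wdb_div_const {f : ℂ → ℂ} {z : ℂ} (hf : DifferentiableAt ℝ f z) (c : ℂ) :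
    wdb (fun w => f w / c) z = wdb f z / c := by
  simp only [wdb, pdx, pdy, pd_div_const hf]; ring

/-- the Laplace-transformed covariant derivatives ∇̃, ∇̄ with
∇̃φ = ∇φ - (∂W/W)φ + 2(∂h/h)φ have magnetic field B̃ = B + ½Δ_h(log|W|) - K;
i.e. the Laplace transformation changes B by B ↦ B + ½Δ_h log|U-B| - K. -/
theorem laplace_transformation_magnetic_field
    (Ω : Set ℂ) (hΩ : IsOpen Ω) (a b h W : ℂ → ℝ)
    (ha : ContDiffOn ℝ (⊤ : ℕ∞) a Ω) (hb : ContDiffOn ℝ (⊤ : ℕ∞) b Ω)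
    (hh : ContDiffOn ℝ (⊤ : ℕ∞) h Ω) (hWs : ContDiffOn ℝ (⊤ : ℕ∞) W Ω)
    (hhpos : ∀ z ∈ Ω, 0 < h z) (hW : ∀ z ∈ Ω, W z ≠ 0)
    (ψ : ℂ → ℂ) (hψ : ContDiffOn ℝ (⊤ : ℕ∞) ψ Ω) :
    let WC : ℂ → ℂ := fun w => ((W w : ℝ) : ℂ)
    let hC : ℂ → ℂ := fun w => ((h w : ℝ) : ℂ)
    let tcd : (ℂ → ℂ) → ℂ → ℂ := fun φ w =>
      cd a b φ w - (wd WC w / WC w) * φ w + 2 * (wd hC w / hC w) * φ w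
    ∀ z ∈ Ω,
      2 * (h z : ℂ)^2 * (tcd (fun w => cdb a b ψ w) z - cdb a b (fun w => tcd ψ w) z)
        = ((Bf a b h z : ℂ)
            + (1 / 2) * DeltaH h (fun w => Real.log |W w|) z
            - Kcurv h z) * ψ z := by
  intro WC hC tcd z hz
  have hWCdef : WC = fun w => ((W w : ℝ) : ℂ) := rfl
  have hhCdef : hC = fun w => ((h w : ℝ) : ℂ) := rfl
  have htcd : ∀ φ w, tcd φ w = cd a b φ w - (wd WC w / WC w) * φ w
      + 2 * (wd hC w / hC w) * φ w := fun φ w => rfl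
  have hmem : Ω ∈ nhds z := hΩ.mem_nhds hz
  have le2 : (2 : WithTop ℕ∞) ≤ ((⊤:ℕ∞) : WithTop ℕ∞) := WithTop.coe_le_coe.2 le_top
  have cψ2 : ContDiffAt ℝ 2 ψ z := (hψ.contDiffAt hmem).of_le le2
  have ca2 : ContDiffAt ℝ 2 a z := (ha.contDiffAt hmem).of_le le2
  have cb2 : ContDiffAt ℝ 2 b z := (hb.contDiffAt hmem).of_le le2
  have cWr : ∀ w ∈ Ω, ContDiffAt ℝ 2 W w := fun w hw =>
    (hWs.contDiffAt (hΩ.mem_nhds hw)).of_le le2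
  have chr : ∀ w ∈ Ω, ContDiffAt ℝ 2 h w := fun w hw =>
    (hh.contDiffAt (hΩ.mem_nhds hw)).of_le le2
  have dWr : ∀ w ∈ Ω, DifferentiableAt ℝ W w := fun w hw =>
    (cWr w hw).differentiableAt two_ne_zero
  have dhr : ∀ w ∈ Ω, DifferentiableAt ℝ h w := fun w hw =>
    (chr w hw).differentiableAt two_ne_zero
  have da : DifferentiableAt ℝ a z := ca2.differentiableAt two_ne_zero
  have db : DifferentiableAt ℝ b z := cb2.differentiableAt two_ne_zero
  have dψ : DifferentiableAt ℝ ψ z := cψ2.differentiableAt two_ne_zero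
  have daC : DifferentiableAt ℝ (fun w => ((a w : ℝ) : ℂ)) z :=
    (Complex.ofRealCLM.differentiableAt).comp z da
  have dbC : DifferentiableAt ℝ (fun w => ((b w : ℝ) : ℂ)) z :=
    (Complex.ofRealCLM.differentiableAt).comp z db
  have cLW2 : ContDiffAt ℝ 2 (fun x => ((Real.log (W x) : ℝ) : ℂ)) z :=
    (Complex.ofRealCLM.contDiff.contDiffAt).comp z
      ((Real.contDiffAt_log.mpr (hW z hz)).comp z (cWr z hz))
  have cLh2 : ContDiffAt ℝ 2 (fun x => ((Real.log (h x) : ℝ) : ℂ)) z :=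
    (Complex.ofRealCLM.contDiff.contDiffAt).comp z
      ((Real.contDiffAt_log.mpr (hhpos z hz).ne').comp z (chr z hz))
  have dwdψ : DifferentiableAt ℝ (fun w => wd ψ w) z := wdDiff cψ2
  have dwdbψ : DifferentiableAt ℝ (fun w => wdb ψ w) z := wdbDiff cψ2
  have dwdLW : DifferentiableAt ℝ (fun w => wd (fun x => ((Real.log (W x) : ℝ) : ℂ)) w) z :=
    wdDiff cLW2
  have dwdLh : DifferentiableAt ℝ (fun w => wd (fun x => ((Real.log (h x) : ℝ) : ℂ)) w) z :=
    wdDiff cLh2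
  have hLW : ∀ w ∈ Ω, wd (fun x => ((Real.log (W x) : ℝ) : ℂ)) w
      = wd (fun x => ((W x : ℝ) : ℂ)) w / ((W w : ℝ) : ℂ) := fun w hw =>
    wd_log (dWr w hw) (hW w hw)
  have hLh : ∀ w ∈ Ω, wd (fun x => ((Real.log (h x) : ℝ) : ℂ)) w
      = wd (fun x => ((h x : ℝ) : ℂ)) w / ((h w : ℝ) : ℂ) := fun w hw =>
    wd_log (dhr w hw) (hhpos w hw).ne'
  simp only [htcd, hWCdef, hhCdef, cd, cdb, Bf, DeltaH, Kcurv, Real.log_abs, pdxR, pdyR]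
  push_cast
  rw [← hLW z hz, ← hLh z hz]
  have dAf : DifferentiableAt ℝ
      (fun w => Complex.I * ((((a w : ℝ) : ℂ) - Complex.I * ((b w : ℝ) : ℂ)) / 2)) z := by
    exact (diff_div_const (daC.sub (dbC.const_mul Complex.I))).const_mul Complex.I
  have dBf : DifferentiableAt ℝ
      (fun w => Complex.I * ((((a w : ℝ) : ℂ) + Complex.I * ((b w : ℝ) : ℂ)) / 2)) z := by
    exact (diff_div_const (daC.add (dbC.const_mul Complex.I))).const_mul Complex.I
  have dG : DifferentiableAt ℝ (fun w => 2 * wd (fun x => ((Real.log (h x) : ℝ) : ℂ)) w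
      - wd (fun x => ((Real.log (W x) : ℝ) : ℂ)) w) z := by
    exact (dwdLh.const_mul 2).sub dwdLW
  have EV : (fun w => wd ψ w
        - Complex.I * ((((a w : ℝ) : ℂ) - Complex.I * ((b w : ℝ) : ℂ)) / 2) * ψ w
        - wd (fun x => ((W x : ℝ) : ℂ)) w / ((W w : ℝ) : ℂ) * ψ w
        + 2 * (wd (fun x => ((h x : ℝ) : ℂ)) w / ((h w : ℝ) : ℂ)) * ψ w)
      =ᶠ[nhds z] (fun w => (wd ψ w
        - Complex.I * ((((a w : ℝ) : ℂ) - Complex.I * ((b w : ℝ) : ℂ)) / 2) * ψ w)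
        + (2 * wd (fun x => ((Real.log (h x) : ℝ) : ℂ)) w
            - wd (fun x => ((Real.log (W x) : ℝ) : ℂ)) w) * ψ w) := by
    filter_upwards [hmem] with w hw
    rw [hLW w hw, hLh w hw]
    ring
  rw [wdb_congr EV]
  rw [wdb_add (dwdψ.fun_sub (dAf.fun_mul dψ)) (dG.fun_mul dψ), wdb_sub dwdψ (dAf.fun_mul dψ),
    wdb_mul dAf dψ, wdb_mul dG dψ, wdb_sub (dwdLh.const_mul 2) dwdLW, wdb_const_mul dwdLh,
    wdb_const_mul (diff_div_const (daC.fun_sub (dbC.const_mul Complex.I))),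
    wdb_div_const (daC.fun_sub (dbC.const_mul Complex.I)), wdb_sub daC (dbC.const_mul Complex.I),
    wdb_const_mul dbC]
  rw [wd_sub dwdbψ (dBf.fun_mul dψ), wd_mul dBf dψ,
    wd_const_mul (diff_div_const (daC.fun_add (dbC.const_mul Complex.I))),
    wd_div_const (daC.fun_add (dbC.const_mul Complex.I)), wd_add daC (dbC.const_mul Complex.I),
    wd_const_mul dbC]
  rw [wd_wdb_comm cψ2]
  have c2 : wdb (fun w => wd (fun x => ((Real.log (W x) : ℝ) : ℂ)) w) z
      = wd (wdb fun w => ((Real.log (W w) : ℝ) : ℂ)) z := (wd_wdb_comm cLW2).symm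
  have c3 : wdb (fun w => wd (fun x => ((Real.log (h x) : ℝ) : ℂ)) w) z
      = wd (wdb fun w => ((Real.log (h w) : ℝ) : ℂ)) z := (wd_wdb_comm cLh2).symm
  rw [c2, c3, ← pd_ofReal db 1, ← pd_ofReal da Complex.I]
  simp only [wd, wdb, pdx, pdy]
  ring_nf
  simp only [show (Complex.I:ℂ)^2 = -1 from Complex.I_sq,
    show (Complex.I:ℂ)^3 = -Complex.I by rw [pow_succ, Complex.I_sq]; ring,
    show (Complex.I:ℂ)^4 = 1 by rw [show (4:ℕ) = 2+2 from rfl, pow_add, Complex.I_sq]; ring]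
  ring
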